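/- Let Q be a finite quiver, W a finite-dimensional representation, σ a weight. Among subrepresentations W' of W maximizing σ(dim W'), there is a unique minimal one (contained in every other optimal σ-witness) and a unique maximal one (containing every other optimal σ-witness). -/
import Mathlib


open Module

/-- A family of subspaces is a subrepresentation of the representation given by
the vertex spaces `Wsp` and the arrow maps `Wmap`. -/
def IsSubrep {ι κ : Type*} {F : Type*} [Field F] {Wsp : ι → Type*}
    [∀ i, AddCommGroup (Wsp i)] [∀ i, Module F (Wsp i)]
    (t h : κ → ι) (Wmap : ∀ a : κ, Wsp (t a) →ₗ[F] Wsp (h a))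
    (W' : ∀ i, Submodule F (Wsp i)) : Prop :=
  ∀ a : κ, (W' (t a)).map (Wmap a) ≤ W' (h a)

/-- `σ(dim W') = Σ_x σ(x)·dim W'(x)`. -/
noncomputable def sigmaDim {ι : Type*} [Fintype ι] {F : Type*} [Field F] {Wsp : ι → Type*}
    [∀ i, AddCommGroup (Wsp i)] [∀ i, Module F (Wsp i)]
    (σ : ι → ℤ) (W' : ∀ i, Submodule F (Wsp i)) : ℤ :=
  ∑ i, σ i * (finrank F (W' i) : ℤ)

/-- `W'` is an optimal σ-witness: a subrepresentation maximizing `σ(dim ·)`. -/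
def IsOptimalWitness {ι κ : Type*} [Fintype ι] {F : Type*} [Field F] {Wsp : ι → Type*}
    [∀ i, AddCommGroup (Wsp i)] [∀ i, Module F (Wsp i)]
    (t h : κ → ι) (Wmap : ∀ a : κ, Wsp (t a) →ₗ[F] Wsp (h a))
    (σ : ι → ℤ) (W' : ∀ i, Submodule F (Wsp i)) : Prop :=
  IsSubrep t h Wmap W' ∧
    ∀ W'' : ∀ i, Submodule F (Wsp i), IsSubrep t h Wmap W'' →
      sigmaDim σ W'' ≤ sigmaDim σ W'

section Aux

variable {F : Type*} [Field F] {ι κ : Type*} [Fintype ι]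
    {Wsp : ι → Type*} [∀ i, AddCommGroup (Wsp i)] [∀ i, Module F (Wsp i)]
    (t h : κ → ι) (Wmap : ∀ a : κ, Wsp (t a) →ₗ[F] Wsp (h a))

lemma isSubrep_inf {A B : ∀ i, Submodule F (Wsp i)}
    (hA : IsSubrep t h Wmap A) (hB : IsSubrep t h Wmap B) :
    IsSubrep t h Wmap (fun i => A i ⊓ B i) := by
  intro a
  refine le_inf ?_ ?_
  · exact le_trans (Submodule.map_mono inf_le_left) (hA a)
  · exact le_trans (Submodule.map_mono inf_le_right) (hB a)

lemma isSubrep_sup {A B : ∀ i, Submodule F (Wsp i)}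
    (hA : IsSubrep t h Wmap A) (hB : IsSubrep t h Wmap B) :
    IsSubrep t h Wmap (fun i => A i ⊔ B i) := by
  intro a
  rw [Submodule.map_sup]
  exact sup_le (le_trans (hA a) le_sup_left) (le_trans (hB a) le_sup_right)

lemma sigmaDim_inf_add_sup [∀ i, FiniteDimensional F (Wsp i)]
    (σ : ι → ℤ) (A B : ∀ i, Submodule F (Wsp i)) :
    sigmaDim σ (fun i => A i ⊓ B i) + sigmaDim σ (fun i => A i ⊔ B i)
      = sigmaDim σ A + sigmaDim σ B := by
  unfold sigmaDim
  rw [← Finset.sum_add_distrib, ← Finset.sum_add_distrib]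
  refine Finset.sum_congr rfl fun i _ => ?_
  have := Submodule.finrank_sup_add_finrank_inf_eq (A i) (B i)
  have h2 : ((Module.finrank F ↥(A i ⊓ B i) : ℤ) + (Module.finrank F ↥(A i ⊔ B i) : ℤ))
      = (Module.finrank F (A i) : ℤ) + (Module.finrank F (B i) : ℤ) := by
    exact_mod_cast congrArg Nat.cast (by omega : finrank F ↥(A i ⊓ B i) + finrank F ↥(A i ⊔ B i) = finrank F (A i) + finrank F (B i))
  rw [← mul_add, ← mul_add, h2]

end Aux

theorem exists_minimal_and_maximal_optimal_witness
    {F : Type*} [Field F] {ι κ : Type*} [Fintype ι] [Fintype κ]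
    {Wsp : ι → Type*} [∀ i, AddCommGroup (Wsp i)] [∀ i, Module F (Wsp i)]
    [∀ i, FiniteDimensional F (Wsp i)]
    (t h : κ → ι) (Wmap : ∀ a : κ, Wsp (t a) →ₗ[F] Wsp (h a))
    (σ : ι → ℤ) :
    (∃ Wmin : ∀ i, Submodule F (Wsp i), IsOptimalWitness t h Wmap σ Wmin ∧
      ∀ W' : ∀ i, Submodule F (Wsp i), IsOptimalWitness t h Wmap σ W' →
        ∀ i, Wmin i ≤ W' i) ∧
    (∃ Wmax : ∀ i, Submodule F (Wsp i), IsOptimalWitness t h Wmap σ Wmax ∧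
      ∀ W' : ∀ i, Submodule F (Wsp i), IsOptimalWitness t h Wmap σ W' →
        ∀ i, W' i ≤ Wmax i) := by
  classical
  -- Step 1: an optimal witness exists.
  set P : ℤ → Prop := fun z => ∃ W'' : ∀ i, Submodule F (Wsp i),
      IsSubrep t h Wmap W'' ∧ sigmaDim σ W'' = z with hP
  have hbdd : ∃ b : ℤ, ∀ z, P z → z ≤ b := by
    refine ⟨∑ i, |σ i| * (finrank F (Wsp i) : ℤ), ?_⟩
    rintro z ⟨W'', -, rfl⟩
    refine Finset.sum_le_sum fun i _ => ?_
    have h1 : (finrank F (W'' i) : ℤ) ≤ (finrank F (Wsp i) : ℤ) := by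
      exact_mod_cast (W'' i).finrank_le
    calc σ i * (finrank F (W'' i) : ℤ)
        ≤ |σ i| * (finrank F (W'' i) : ℤ) := by
          exact mul_le_mul_of_nonneg_right (le_abs_self _) (by positivity)
      _ ≤ |σ i| * (finrank F (Wsp i) : ℤ) :=
          mul_le_mul_of_nonneg_left h1 (abs_nonneg _)
  have hinh : ∃ z, P z := ⟨_, fun _ => ⊥, fun a => by simp, rfl⟩
  obtain ⟨M, ⟨W0, hW0sub, hW0dim⟩, hMmax⟩ := Int.exists_greatest_of_bdd hbdd hinh
  have hOptIff : ∀ W' : ∀ i, Submodule F (Wsp i),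
      IsOptimalWitness t h Wmap σ W' ↔ (IsSubrep t h Wmap W' ∧ sigmaDim σ W' = M) := by
    intro W'
    constructor
    · rintro ⟨hs, hm⟩
      refine ⟨hs, le_antisymm (hMmax _ ⟨W', hs, rfl⟩) ?_⟩
      rw [← hW0dim]; exact hm W0 hW0sub
    · rintro ⟨hs, hm⟩
      exact ⟨hs, fun W'' hW'' => by rw [hm]; exact hMmax _ ⟨W'', hW'', rfl⟩⟩
  have hW0opt : IsOptimalWitness t h Wmap σ W0 := (hOptIff W0).2 ⟨hW0sub, hW0dim⟩
  -- total dimension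
  set total : (∀ i, Submodule F (Wsp i)) → ℕ := fun W' => ∑ i, finrank F (W' i) with htotal
  -- key: inf and sup of optimal are optimal
  have hkey : ∀ A B : ∀ i, Submodule F (Wsp i),
      IsOptimalWitness t h Wmap σ A → IsOptimalWitness t h Wmap σ B →
      IsOptimalWitness t h Wmap σ (fun i => A i ⊓ B i) ∧
      IsOptimalWitness t h Wmap σ (fun i => A i ⊔ B i) := by
    intro A B hA hB
    obtain ⟨hAs, hAd⟩ := (hOptIff A).1 hA
    obtain ⟨hBs, hBd⟩ := (hOptIff B).1 hB
    have hinfs := isSubrep_inf t h Wmap hAs hBs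
    have hsups := isSubrep_sup t h Wmap hAs hBs
    have hsum := sigmaDim_inf_add_sup σ A B
    have h1 : sigmaDim σ (fun i => A i ⊓ B i) ≤ M := hMmax _ ⟨_, hinfs, rfl⟩
    have h2 : sigmaDim σ (fun i => A i ⊔ B i) ≤ M := hMmax _ ⟨_, hsups, rfl⟩
    rw [hAd, hBd] at hsum
    constructor
    · exact (hOptIff _).2 ⟨hinfs, by omega⟩
    · exact (hOptIff _).2 ⟨hsups, by omega⟩
  constructor
  · -- minimal: take optimal witness of least total dimension
    set S : Set ℕ := {n | ∃ W', IsOptimalWitness t h Wmap σ W' ∧ total W' = n} with hS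
    have hSne : S.Nonempty := ⟨total W0, W0, hW0opt, rfl⟩
    obtain ⟨Wmin, hWminopt, hWmindim⟩ := Nat.sInf_mem hSne
    refine ⟨Wmin, hWminopt, fun W' hW' i => ?_⟩
    obtain ⟨hinfopt, -⟩ := hkey Wmin W' hWminopt hW'
    have hle : sInf S ≤ total (fun i => Wmin i ⊓ W' i) := Nat.sInf_le ⟨_, hinfopt, rfl⟩
    rw [← hWmindim] at hle
    have hterm : ∀ j ∈ Finset.univ, finrank F (↥(Wmin j ⊓ W' j)) ≤ finrank F (Wmin j) :=
      fun j _ => Submodule.finrank_mono inf_le_left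
    have hsumle : total (fun i => Wmin i ⊓ W' i) ≤ total Wmin := Finset.sum_le_sum hterm
    have heq : total (fun i => Wmin i ⊓ W' i) = total Wmin := le_antisymm hsumle hle
    have := (Finset.sum_eq_sum_iff_of_le hterm).1 heq i (Finset.mem_univ i)
    have heqmod : Wmin i ⊓ W' i = Wmin i :=
      Submodule.eq_of_le_of_finrank_le inf_le_left this.ge
    rw [← heqmod]; exact inf_le_right
  · -- maximal: take optimal witness of greatest total dimension
    set S : Set ℕ := {n | ∃ W', IsOptimalWitness t h Wmap σ W' ∧ total W' = n} with hS
    have hSne : S.Nonempty := ⟨total W0, W0, hW0opt, rfl⟩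
    have hSbdd : BddAbove S := by
      refine ⟨∑ i, finrank F (Wsp i), ?_⟩
      rintro n ⟨W', -, rfl⟩
      exact Finset.sum_le_sum fun i _ => (W' i).finrank_le
    obtain ⟨Wmax, hWmaxopt, hWmaxdim⟩ := Nat.sSup_mem hSne hSbdd
    refine ⟨Wmax, hWmaxopt, fun W' hW' i => ?_⟩
    obtain ⟨-, hsupopt⟩ := hkey Wmax W' hWmaxopt hW'
    have hle : total (fun i => Wmax i ⊔ W' i) ≤ sSup S := le_csSup hSbdd ⟨_, hsupopt, rfl⟩
    rw [← hWmaxdim] at hle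
    have hterm : ∀ j ∈ Finset.univ, finrank F (Wmax j) ≤ finrank F (↥(Wmax j ⊔ W' j)) :=
      fun j _ => Submodule.finrank_mono le_sup_left
    have hsumle : total Wmax ≤ total (fun i => Wmax i ⊔ W' i) := Finset.sum_le_sum hterm
    have heq : total Wmax = total (fun i => Wmax i ⊔ W' i) := le_antisymm hsumle hle
    have := (Finset.sum_eq_sum_iff_of_le hterm).1 heq i (Finset.mem_univ i)
    have heqmod : Wmax i = Wmax i ⊔ W' i :=
      Submodule.eq_of_le_of_finrank_le le_sup_left (le_of_eq this.symm)
    rw [heqmod]; exact le_sup_right
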